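/- Let Λ be a right artinian local ring and let 𝒞 be an IE-closed subcategory of the category of finitely generated right Λ-modules (closed under images and extensions). Then either 𝒞 consists only of the zero module or 𝒞 contains every finitely generated right Λ-module. In particular, every IE-closed subcategory of mod Λ is a Serre subcategory. -/

import Mathlib

universe u

section Defs

variable (A : Type u) [Ring A]

/-- `C` is a subcategory of `mod A`: it is closed under isomorphisms, contains the zero
modules, and consists of finitely generated modules. -/
def IsModSubcat (C : Set (ModuleCat.{u} A)) : Prop :=
  (∀ M N : ModuleCat.{u} A, (M ≃ₗ[A] N) → M ∈ C → N ∈ C) ∧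
  (∀ M : ModuleCat.{u} A, Subsingleton M → M ∈ C) ∧
  (∀ M ∈ C, Module.Finite A M)

/-- `C` is closed under submodules. -/
def SubmoduleClosed (C : Set (ModuleCat.{u} A)) : Prop :=
  ∀ M ∈ C, ∀ N : Submodule A M, ModuleCat.of A N ∈ C

/-- `C` is closed under quotient modules. -/
def QuotClosed (C : Set (ModuleCat.{u} A)) : Prop :=
  ∀ M ∈ C, ∀ N : Submodule A M, ModuleCat.of A (M ⧸ N) ∈ C

/-- `C` is closed under images: for every `A`-linear map `f : C₁ → C₂` with `C₁, C₂ ∈ C`,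
the image of `f` belongs to `C`. -/
def ImagesClosed (C : Set (ModuleCat.{u} A)) : Prop :=
  ∀ M₁ ∈ C, ∀ M₂ ∈ C, ∀ f : M₁ →ₗ[A] M₂, ModuleCat.of A (LinearMap.range f) ∈ C

/-- `C` is closed under kernels: for every `A`-linear map `f : C₁ → C₂` with `C₁, C₂ ∈ C`,
the kernel of `f` belongs to `C`. -/
def KernelsClosed (C : Set (ModuleCat.{u} A)) : Prop :=
  ∀ M₁ ∈ C, ∀ M₂ ∈ C, ∀ f : M₁ →ₗ[A] M₂, ModuleCat.of A (LinearMap.ker f) ∈ C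

/-- `C` is closed under extensions: for every short exact sequence
`0 → L → M → N → 0` of finitely generated modules with `L, N ∈ C`, we have `M ∈ C`. -/
def ExtClosed (C : Set (ModuleCat.{u} A)) : Prop :=
  ∀ (L M N : ModuleCat.{u} A), Module.Finite A M →
    ∀ (f : L →ₗ[A] M) (g : M →ₗ[A] N),
      Function.Injective f → Function.Surjective g →
      LinearMap.range f = LinearMap.ker g →
      L ∈ C → N ∈ C → M ∈ C

end Defs

/-!
STATEMENT 8: Let `Λ` be a right artinian local ring and `𝒞` an IE-closed subcategory of
`mod Λ` (finitely generated right `Λ`-modules, encoded as `Λᵐᵒᵖ`-modules). Then either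
`𝒞` consists only of the zero module, or `𝒞` contains every finitely generated right
`Λ`-module. In particular, `𝒞` is a Serre subcategory.
-/

namespace IEAux

variable {R : Type u} [Ring R]

theorem ideal_pow_mul_pow (I : Ideal R) :
    ∀ k, k ≠ 0 → ∀ m, I ^ m * I ^ k = I ^ (m + k) := by
  intro k
  induction k with
  | zero => intro h; exact absurd rfl h
  | succ k ih =>
    intro _ m
    rcases Nat.eq_zero_or_pos k with rfl | hk
    · rw [Submodule.pow_one, ← Submodule.pow_succ]
    · rw [Submodule.pow_succ, ← Ideal.mul_assoc, ih hk.ne', ← Submodule.pow_succ,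
        ← Nat.add_assoc]

section LocalRing
variable [IsLocalRing R]

theorem isUnit_of_left_inv {a b : R} (h : b * a = 1) : IsUnit a := by
  rcases IsLocalRing.isUnit_or_isUnit_of_add_one (a := a * b) (b := 1 - a * b)
    (by abel) with hu | hu
  · obtain ⟨u, hu⟩ := hu
    have hc : a * (b * ↑u⁻¹) = 1 := by rw [← mul_assoc, ← hu, Units.mul_inv]
    have hcb : b * ↑u⁻¹ = b := by
      calc b * ↑u⁻¹ = (b * a) * (b * ↑u⁻¹) := by rw [h, one_mul]
      _ = b * (a * (b * ↑u⁻¹)) := by rw [mul_assoc]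
      _ = b := by rw [hc, mul_one]
    exact ⟨⟨a, b, by rw [← hcb]; exact hc, h⟩, rfl⟩
  · obtain ⟨u, hu⟩ := hu
    have h0 : (1 - a * b) * a = 0 := by
      rw [sub_mul, one_mul, mul_assoc, h, mul_one, sub_self]
    have ha : a = 0 := by
      have h2 : ↑u * a = 0 := by rw [hu]; exact h0
      calc a = ↑u⁻¹ * (↑u * a) := (u.inv_mul_cancel_left a).symm
      _ = 0 := by rw [h2, mul_zero]
    rw [ha, mul_zero] at h
    exact absurd h.symm one_ne_zero

theorem isUnit_of_right_inv {a b : R} (h : a * b = 1) : IsUnit a := by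
  rcases IsLocalRing.isUnit_or_isUnit_of_add_one (a := b * a) (b := 1 - b * a)
    (by abel) with hu | hu
  · obtain ⟨u, hu⟩ := hu
    have hc : (↑u⁻¹ * b) * a = 1 := by rw [mul_assoc, ← hu, Units.inv_mul]
    exact isUnit_of_left_inv hc
  · obtain ⟨u, hu⟩ := hu
    have h0 : (1 - b * a) * b = 0 := by
      rw [sub_mul, one_mul, mul_assoc, h, mul_one, sub_self]
    have hb : b = 0 := by
      have h2 : ↑u * b = 0 := by rw [hu]; exact h0
      calc b = ↑u⁻¹ * (↑u * b) := (u.inv_mul_cancel_left b).symm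
      _ = 0 := by rw [h2, mul_zero]
    rw [hb, mul_zero] at h
    exact absurd h.symm one_ne_zero

variable (R) in
/-- The ideal of nonunits of a (possibly noncommutative) local ring, as a left ideal. -/
def nuIdeal : Ideal R where
  carrier := {a | ¬ IsUnit a}
  zero_mem' := fun h => one_ne_zero ((isUnit_zero_iff.mp h).symm)
  add_mem' := fun {a b} ha hb => by
    show ¬ IsUnit (a + b)
    intro h
    obtain ⟨u, hu⟩ := h
    have h1 : ↑u⁻¹ * a + ↑u⁻¹ * b = 1 := by
      rw [← mul_add, ← hu, Units.inv_mul]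
    rcases IsLocalRing.isUnit_or_isUnit_of_add_one h1 with h2 | h2
    · refine ha ?_
      have h3 := u.isUnit.mul h2
      rwa [← mul_assoc, Units.mul_inv, one_mul] at h3
    · refine hb ?_
      have h3 := u.isUnit.mul h2
      rwa [← mul_assoc, Units.mul_inv, one_mul] at h3
  smul_mem' := fun c a ha => by
    intro h
    rw [smul_eq_mul] at h
    obtain ⟨u, hu⟩ := h
    have hc : (↑u⁻¹ * c) * a = 1 := by rw [mul_assoc, ← hu, Units.inv_mul]
    exact ha (isUnit_of_left_inv hc)

theorem mem_nuIdeal {a : R} : a ∈ nuIdeal R ↔ ¬ IsUnit a :=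
  ⟨fun h => by exact h, fun h => by exact h⟩

theorem nuIdeal_ne_top : nuIdeal R ≠ ⊤ := fun h =>
  (mem_nuIdeal.mp ((Ideal.eq_top_iff_one _).mp h)) isUnit_one

theorem mul_mem_nuIdeal_right {a : R} (ha : a ∈ nuIdeal R) (c : R) : a * c ∈ nuIdeal R := by
  refine mem_nuIdeal.mpr fun h => ?_
  obtain ⟨u, hu⟩ := h
  have hc : a * (c * ↑u⁻¹) = 1 := by rw [← mul_assoc, ← hu, Units.mul_inv]
  exact (mem_nuIdeal.mp ha) (isUnit_of_right_inv hc)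

theorem le_nuIdeal {I : Ideal R} (h : I ≠ ⊤) : I ≤ nuIdeal R :=
  fun x hx => mem_nuIdeal.mpr fun hu => h (Ideal.eq_top_of_isUnit_mem I hx hu)

theorem eq_nuIdeal_of_isCoatom {I : Ideal R} (h : IsCoatom I) : I = nuIdeal R := by
  rcases lt_or_eq_of_le (le_nuIdeal h.1) with hlt | he
  · exact absurd (h.2 _ hlt) nuIdeal_ne_top
  · exact he

theorem mem_nu_smul_finset {M : Type u} [AddCommGroup M] [Module R M] {s : Finset M} {x : M}
    (hx : x ∈ nuIdeal R • Submodule.span R (↑s : Set M)) :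
    ∃ a : M → R, (∀ i, a i ∈ nuIdeal R) ∧ ∑ i ∈ s, a i • i = x := by
  refine Submodule.smul_induction_on hx ?_ ?_
  · intro r hr m hm
    obtain ⟨f, -, hf⟩ := Submodule.mem_span_finset.mp hm
    refine ⟨fun i => r * f i, fun i => mul_mem_nuIdeal_right hr _, ?_⟩
    rw [← hf, Finset.smul_sum]
    exact Finset.sum_congr rfl fun i _ => (smul_smul r (f i) i).symm
  · rintro y z ⟨a, ha, hay⟩ ⟨b, hb, hbz⟩
    refine ⟨fun i => a i + b i, fun i => (nuIdeal R).add_mem (ha i) (hb i), ?_⟩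
    simp only [add_smul, Finset.sum_add_distrib, hay, hbz]

theorem nakayama_aux (n : ℕ) :
    ∀ {M : Type u} [AddCommGroup M] [Module R M] (s : Finset M), s.card ≤ n →
      Submodule.span R (↑s : Set M) ≤ nuIdeal R • Submodule.span R (↑s : Set M) →
      Submodule.span R (↑s : Set M) = ⊥ := by
  induction n with
  | zero =>
    intro M _ _ s hcard _
    rw [Finset.card_eq_zero.mp (Nat.le_zero.mp hcard)]
    simp
  | succ n ihn =>
    intro M _ _ s hcard hle
    classical
    rcases s.eq_empty_or_nonempty with rfl | ⟨x, hx⟩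
    · simp
    · have hxmem : x ∈ nuIdeal R • Submodule.span R (↑s : Set M) :=
        hle (Submodule.subset_span hx)
      obtain ⟨a, haI, hsum⟩ := mem_nu_smul_finset hxmem
      have h1 : (1 - a x) • x = ∑ i ∈ s.erase x, a i • i := by
        rw [← Finset.add_sum_erase s _ hx] at hsum
        rw [sub_smul, one_smul, sub_eq_iff_eq_add']
        exact hsum.symm
      have hu : IsUnit (1 - a x) := by
        rcases IsLocalRing.isUnit_or_isUnit_of_add_one (a := a x) (b := 1 - a x)
          (by abel) with h | h
        · exact absurd h (mem_nuIdeal.mp (haI x))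
        · exact h
      obtain ⟨u, hu⟩ := hu
      have hxspan : x ∈ Submodule.span R (↑(s.erase x) : Set M) := by
        have hmem : (↑u⁻¹ : R) • ∑ i ∈ s.erase x, a i • i ∈
            Submodule.span R (↑(s.erase x) : Set M) :=
          Submodule.smul_mem _ _ (Submodule.sum_mem _ fun i hi =>
            Submodule.smul_mem _ _ (Submodule.subset_span (Finset.mem_coe.mpr hi)))
        have hxeq : (↑u⁻¹ : R) • ∑ i ∈ s.erase x, a i • i = x := by
          rw [← h1, ← hu, smul_smul, Units.inv_mul, one_smul]
        rwa [hxeq] at hmem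
      have hspan : Submodule.span R (↑s : Set M) = Submodule.span R (↑(s.erase x) : Set M) := by
        apply le_antisymm
        · rw [Submodule.span_le]
          intro y hy
          rcases eq_or_ne y x with rfl | hne
          · exact hxspan
          · exact Submodule.subset_span (Finset.mem_erase.mpr ⟨hne, hy⟩)
        · exact Submodule.span_mono (fun y hy => Finset.mem_of_mem_erase hy)
      have hpos : 1 ≤ s.card := Finset.card_pos.mpr ⟨x, hx⟩
      have hcard' : (s.erase x).card ≤ n := by
        rw [Finset.card_erase_of_mem hx]; omega
      rw [hspan]
      exact ihn (s.erase x) hcard' (by rw [← hspan]; exact hle)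

theorem nakayama {M : Type u} [AddCommGroup M] [Module R M] {N : Submodule R M}
    (hfg : N.FG) (hle : N ≤ nuIdeal R • N) : N = ⊥ := by
  obtain ⟨s, hs⟩ := hfg
  rw [← hs] at hle ⊢
  exact nakayama_aux s.card s le_rfl hle

theorem nuIdeal_nilpotent [IsArtinianRing R] : ∃ n : ℕ, (nuIdeal R) ^ n = ⊥ := by
  obtain ⟨n, hn⟩ := IsArtinian.monotone_stabilizes (R := R) (M := R)
    ⟨fun k => OrderDual.toDual ((nuIdeal R) ^ k), fun k l h => Ideal.pow_le_pow_right h⟩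
  have hnm : ∀ m, n ≤ m → (nuIdeal R) ^ n = (nuIdeal R) ^ m := fun m h =>
    OrderDual.toDual.injective (hn m h)
  set I := (nuIdeal R) ^ (n + 1) with hI
  have hII : I * I = I := by
    rw [hI, ideal_pow_mul_pow _ (n + 1) (Nat.succ_ne_zero n) (n + 1)]
    calc (nuIdeal R) ^ (n + 1 + (n + 1)) = (nuIdeal R) ^ n := (hnm _ (by omega)).symm
    _ = (nuIdeal R) ^ (n + 1) := hnm _ (by omega)
  refine ⟨n + 1, ?_⟩
  by_contra hbot
  have hS : ({K : Submodule R R | I • K ≠ ⊥} : Set _).Nonempty := by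
    refine ⟨⊤, fun hb => ?_⟩
    obtain ⟨i, hi, hi0⟩ := Submodule.exists_mem_ne_zero_of_ne_bot hbot
    have : i • (1 : R) ∈ I • (⊤ : Submodule R R) :=
      Submodule.smul_mem_smul hi Submodule.mem_top
    rw [hb, smul_eq_mul, mul_one] at this
    exact hi0 ((Submodule.mem_bot R).mp this)
  obtain ⟨K, hK, hmin⟩ := IsArtinian.set_has_minimal {K : Submodule R R | I • K ≠ ⊥} hS
  have hex : ∃ x ∈ K, I • Submodule.span R {x} ≠ (⊥ : Submodule R R) := by
    by_contra hall
    push_neg at hall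
    apply hK
    rw [eq_bot_iff]
    refine Submodule.smul_le.mpr fun r hr k hk => ?_
    exact (hall k hk) ▸ Submodule.smul_mem_smul hr (Submodule.mem_span_singleton_self k)
  obtain ⟨x, hxK, hxne⟩ := hex
  have hsx : Submodule.span R {x} = K := by
    have hle : Submodule.span R {x} ≤ K :=
      Submodule.span_le.mpr (Set.singleton_subset_iff.mpr hxK)
    rcases lt_or_eq_of_le hle with h | h
    · exact absurd h (hmin _ hxne)
    · exact h
  have hIKle : I • K ≤ K := Submodule.smul_le.mpr fun r hr k hk => Submodule.smul_mem K r hk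
  have hIK : I • K = K := by
    rcases lt_or_eq_of_le hIKle with h | h
    · refine absurd h (hmin _ ?_)
      show I • (I • K) ≠ ⊥
      rw [← Submodule.smul_assoc, show (I • I : Ideal R) = I from hII]
      exact hK
    · exact h
  have hKle : K ≤ nuIdeal R • K := by
    conv_lhs => rw [← hIK]
    exact Submodule.smul_mono_left (Ideal.pow_le_self (Nat.succ_ne_zero n))
  have hKbot : K = ⊥ := nakayama (hsx ▸ Submodule.fg_span_singleton x) hKle
  apply hK
  rw [hKbot, Submodule.smul_bot]

theorem isNoetherian_of_nu_smul_eq_bot {M : Type u} [AddCommGroup M] [Module R M]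
    [IsArtinian R M] (h : nuIdeal R • (⊤ : Submodule R M) = ⊥) : IsNoetherian R M := by
  have hkill : ∀ c : R, ¬ IsUnit c → ∀ m : M, c • m = 0 := fun c hc m => by
    have hmem : c • m ∈ nuIdeal R • (⊤ : Submodule R M) :=
      Submodule.smul_mem_smul (mem_nuIdeal.mpr hc) Submodule.mem_top
    rw [h] at hmem
    exact (Submodule.mem_bot R).mp hmem
  have hss : IsSemisimpleModule R M := by
    apply IsSemisimpleModule.of_sSup_simples_eq_top
    rw [eq_top_iff]
    intro x _
    rcases eq_or_ne x 0 with rfl | hx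
    · exact Submodule.zero_mem _
    · have hsimple : IsSimpleModule R ↥(Submodule.span R ({x} : Set M)) := by
        rw [isSimpleModule_iff_isAtom]
        constructor
        · rw [ne_eq, Submodule.span_singleton_eq_bot]
          exact hx
        · intro b hb
          by_contra hbne
          obtain ⟨v, hub, hu0⟩ := Submodule.exists_mem_ne_zero_of_ne_bot hbne
          obtain ⟨c, rfl⟩ := Submodule.mem_span_singleton.mp (hb.le hub)
          have hcu : IsUnit c := by
            by_contra hcn
            exact hu0 (hkill c hcn x)
          obtain ⟨w, rfl⟩ := hcu
          have hxb : x ∈ b := by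
            have hmem := b.smul_mem (↑w⁻¹ : R) hub
            rwa [smul_smul, Units.inv_mul, one_smul] at hmem
          exact hb.not_ge (Submodule.span_le.mpr (Set.singleton_subset_iff.mpr hxb))
      exact le_sSup (show Submodule.span R ({x} : Set M) ∈
        {m : Submodule R M | IsSimpleModule R ↥m} from hsimple)
        (Submodule.mem_span_singleton_self x)
  exact (IsSemisimpleModule.finite_tfae.out 2 1).mp ‹IsArtinian R M›

theorem isNoetherian_of_isArtinian_module [IsArtinianRing R]
    (M : Type u) [AddCommGroup M] [Module R M] [IsArtinian R M] : IsNoetherian R M := by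
  obtain ⟨n, hn⟩ := nuIdeal_nilpotent (R := R)
  have key : ∀ k : ℕ, ∀ (M : Type u) [AddCommGroup M] [Module R M] [IsArtinian R M],
      (nuIdeal R) ^ k • (⊤ : Submodule R M) = ⊥ → IsNoetherian R M := by
    intro k
    induction k with
    | zero =>
      intro M _ _ _ h
      rw [Submodule.pow_zero, Ideal.one_eq_top, Submodule.top_smul] at h
      have hsub : Subsingleton M := by
        constructor
        intro a b
        have ha := (Submodule.eq_bot_iff _).mp h a Submodule.mem_top
        have hb := (Submodule.eq_bot_iff _).mp h b Submodule.mem_top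
        rw [ha, hb]
      haveI := hsub
      haveI : Finite M := Finite.of_subsingleton
      exact isNoetherian_of_finite R M
    | succ k ih =>
      intro M _ _ _ h
      set N : Submodule R M := nuIdeal R • ⊤ with hN
      haveI hNnoeth : IsNoetherian R ↥N := by
        apply ih
        apply Submodule.map_injective_of_injective (Submodule.injective_subtype N)
        rw [Submodule.map_smul'', Submodule.map_subtype_top, Submodule.map_bot, hN,
          ← Submodule.smul_assoc,
          show ((nuIdeal R) ^ k • nuIdeal R : Ideal R) = (nuIdeal R) ^ (k + 1) from by
            rw [Ideal.smul_eq_mul]; exact (Submodule.pow_succ _).symm]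
        exact h
      have hQnoeth : IsNoetherian R (M ⧸ N) := by
        apply isNoetherian_of_nu_smul_eq_bot
        have htop : (⊤ : Submodule R (M ⧸ N)) = Submodule.map N.mkQ ⊤ := by
          rw [Submodule.map_top, Submodule.range_mkQ]
        rw [htop, ← Submodule.map_smul'', ← hN]
        exact eq_bot_iff.mpr (Submodule.map_le_iff_le_comap.mpr
          (by rw [Submodule.comap_bot, Submodule.ker_mkQ]))
      exact isNoetherian_of_range_eq_ker N.subtype N.mkQ
        (by rw [Submodule.range_subtype, Submodule.ker_mkQ])
  exact key n M (by rw [hn, Submodule.bot_smul])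

theorem simple_equiv (T U : Type u) [AddCommGroup T] [Module R T] [AddCommGroup U] [Module R U]
    (hT : IsSimpleModule R T) (hU : IsSimpleModule R U) : Nonempty (T ≃ₗ[R] U) := by
  suffices h : ∀ (T : Type u) [AddCommGroup T] [Module R T], IsSimpleModule R T →
      Nonempty ((R ⧸ nuIdeal R) ≃ₗ[R] T) by
    obtain ⟨e1⟩ := h T hT
    obtain ⟨e2⟩ := h U hU
    exact ⟨e1.symm.trans e2⟩
  intro T _ _ hT
  haveI := hT
  haveI : Nontrivial T := IsSimpleModule.nontrivial R T
  obtain ⟨t, ht⟩ := exists_ne (0 : T)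
  have hsurj : Function.Surjective (LinearMap.toSpanSingleton R T t) := by
    rw [← LinearMap.range_eq_top, ← LinearMap.span_singleton_eq_range]
    rcases eq_bot_or_eq_top (Submodule.span R ({t} : Set T)) with hh | hh
    · exact absurd (Submodule.span_singleton_eq_bot.mp hh) ht
    · exact hh
  have e := LinearMap.quotKerEquivOfSurjective (LinearMap.toSpanSingleton R T t) hsurj
  have hker : LinearMap.ker (LinearMap.toSpanSingleton R T t) = nuIdeal R := by
    apply eq_nuIdeal_of_isCoatom
    rw [← isSimpleModule_iff_isCoatom]
    exact IsSimpleModule.congr e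
  exact ⟨hker ▸ e⟩

end LocalRing

end IEAux

theorem ie_closed_of_artinian_local
    (Λ : Type u) [Ring Λ] [IsArtinianRing Λᵐᵒᵖ] [IsLocalRing Λ]
    (C : Set (ModuleCat.{u} Λᵐᵒᵖ)) (hC : IsModSubcat Λᵐᵒᵖ C)
    (him : ImagesClosed Λᵐᵒᵖ C) (hext : ExtClosed Λᵐᵒᵖ C) :
    ((∀ M ∈ C, Subsingleton M) ∨
      (∀ M : ModuleCat.{u} Λᵐᵒᵖ, Module.Finite Λᵐᵒᵖ M → M ∈ C)) ∧
    (SubmoduleClosed Λᵐᵒᵖ C ∧ QuotClosed Λᵐᵒᵖ C) := by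
  haveI : IsLocalRing Λᵐᵒᵖ := by
    refine { isUnit_or_isUnit_of_add_one := ?_ }
    intro a b h
    have h' : a.unop + b.unop = 1 := by
      rw [← MulOpposite.unop_add, h, MulOpposite.unop_one]
    rcases IsLocalRing.isUnit_or_isUnit_of_add_one h' with h1 | h1
    · exact Or.inl (isUnit_unop.mp h1)
    · exact Or.inr (isUnit_unop.mp h1)
  by_cases hss : ∀ M ∈ C, Subsingleton M
  · refine ⟨Or.inl hss, ?_, ?_⟩
    · intro M hM N
      haveI := hss M hM
      exact hC.2.1 _ (inferInstanceAs (Subsingleton (↥N)))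
    · intro M hM N
      haveI := hss M hM
      haveI : Subsingleton ((M : Type u) ⧸ N) :=
        (Submodule.mkQ_surjective N).subsingleton
      exact hC.2.1 _ (inferInstanceAs (Subsingleton ((M : Type u) ⧸ N)))
  · push_neg at hss
    obtain ⟨M₀, hM₀C, hM₀⟩ := hss
    haveI : Nontrivial (M₀ : Type u) := hM₀
    haveI : Module.Finite Λᵐᵒᵖ (M₀ : Type u) := hC.2.2 M₀ hM₀C
    haveI : IsArtinian Λᵐᵒᵖ (M₀ : Type u) := isArtinian_of_fg_of_artinian'
    haveI : IsNoetherian Λᵐᵒᵖ (M₀ : Type u) := IEAux.isNoetherian_of_isArtinian_module _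
    have hsimpleC : ∀ L : ModuleCat.{u} Λᵐᵒᵖ, IsSimpleModule Λᵐᵒᵖ (L : Type u) → L ∈ C := by
      have hcoat : ∃ m : Submodule Λᵐᵒᵖ (M₀ : Type u), IsCoatom m := by
        have hco : IsCoatomic (Submodule Λᵐᵒᵖ (M₀ : Type u)) :=
          isCoatomic_of_orderTop_gt_wellFounded (IsNoetherian.wf inferInstance)
        rcases hco.eq_top_or_exists_le_coatom ⊥ with h | ⟨m, hm, -⟩
        · exact absurd h bot_ne_top
        · exact ⟨m, hm⟩
      obtain ⟨m, hm⟩ := hcoat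
      have hat : ∃ a : Submodule Λᵐᵒᵖ (M₀ : Type u), IsAtom a := by
        have hat' : IsAtomic (Submodule Λᵐᵒᵖ (M₀ : Type u)) :=
          isAtomic_of_orderBot_wellFounded_lt wellFounded_lt
        rcases hat'.eq_bot_or_exists_atom_le ⊤ with h | ⟨a, ha, -⟩
        · exact absurd h.symm bot_ne_top
        · exact ⟨a, ha⟩
      obtain ⟨a, ha⟩ := hat
      have hsQ : IsSimpleModule Λᵐᵒᵖ ((M₀ : Type u) ⧸ m) := isSimpleModule_iff_isCoatom.mpr hm
      have hsa : IsSimpleModule Λᵐᵒᵖ (↥a) := isSimpleModule_iff_isAtom.mpr ha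
      obtain ⟨e⟩ := IEAux.simple_equiv _ _ hsQ hsa
      have hrange : LinearMap.range (a.subtype ∘ₗ (e.toLinearMap ∘ₗ m.mkQ)) = a := by
        have hsurj : Function.Surjective (e.toLinearMap ∘ₗ m.mkQ) := by
          rw [LinearMap.coe_comp]
          exact e.surjective.comp (Submodule.mkQ_surjective m)
        rw [LinearMap.range_comp, LinearMap.range_eq_top.mpr hsurj, Submodule.map_subtype_top]
      have haC : ModuleCat.of Λᵐᵒᵖ (↥a) ∈ C := by
        have h2 := him M₀ hM₀C M₀ hM₀C (a.subtype ∘ₗ (e.toLinearMap ∘ₗ m.mkQ))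
        rwa [hrange] at h2
      intro L hL
      obtain ⟨e2⟩ := IEAux.simple_equiv (↥a) (L : Type u) hsa hL
      exact hC.1 _ _ e2 haC
    have key : ∀ M : ModuleCat.{u} Λᵐᵒᵖ, Module.Finite Λᵐᵒᵖ M → M ∈ C := by
      intro M hfin
      haveI := hfin
      haveI : IsArtinian Λᵐᵒᵖ (M : Type u) := isArtinian_of_fg_of_artinian'
      haveI : IsNoetherian Λᵐᵒᵖ (M : Type u) := IEAux.isNoetherian_of_isArtinian_module _
      have claim : ∀ N : Submodule Λᵐᵒᵖ (M : Type u),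
          ModuleCat.of Λᵐᵒᵖ ((M : Type u) ⧸ N) ∈ C := by
        intro N
        induction N using WellFounded.induction (IsNoetherian.wf
          (inferInstance : IsNoetherian Λᵐᵒᵖ (M : Type u))) with
        | _ N ih =>
        by_cases hN : N = ⊤
        · haveI : Subsingleton ((M : Type u) ⧸ N) :=
            Submodule.Quotient.subsingleton_iff.mpr hN
          exact hC.2.1 _ (inferInstanceAs (Subsingleton ((M : Type u) ⧸ N)))
        · haveI : Nontrivial ((M : Type u) ⧸ N) :=
            not_subsingleton_iff_nontrivial.mp
              (fun hs => hN (Submodule.Quotient.subsingleton_iff.mp hs))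
          obtain ⟨A, hA⟩ : ∃ A : Submodule Λᵐᵒᵖ ((M : Type u) ⧸ N), IsAtom A := by
            have hat' : IsAtomic (Submodule Λᵐᵒᵖ ((M : Type u) ⧸ N)) :=
              isAtomic_of_orderBot_wellFounded_lt wellFounded_lt
            rcases hat'.eq_bot_or_exists_atom_le ⊤ with h | ⟨A, hA, -⟩
            · exact absurd h.symm bot_ne_top
            · exact ⟨A, hA⟩
          set N' : Submodule Λᵐᵒᵖ (M : Type u) := A.comap N.mkQ with hN'
          have hmapN' : Submodule.map N.mkQ N' = A :=
            Submodule.map_comap_eq_of_surjective (Submodule.mkQ_surjective N) A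
          have hNN' : N < N' := by
            rw [lt_iff_le_and_ne]
            constructor
            · intro x hx
              show N.mkQ x ∈ A
              rw [show N.mkQ x = 0 from (Submodule.Quotient.mk_eq_zero N).mpr hx]
              exact A.zero_mem
            · intro hEq
              apply hA.1
              rw [← hmapN', ← hEq]
              exact eq_bot_iff.mpr (Submodule.map_le_iff_le_comap.mpr
                (by rw [Submodule.comap_bot, Submodule.ker_mkQ]))
          have hQC : ModuleCat.of Λᵐᵒᵖ (((M : Type u) ⧸ N) ⧸ A) ∈ C := by
            have h1 := ih N' hNN'
            refine hC.1 _ _ ?_ h1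
            have e3 := Submodule.quotientQuotientEquivQuotient N N' hNN'.le
            rw [hmapN'] at e3
            exact e3.symm
          exact hext (ModuleCat.of Λᵐᵒᵖ (↥A)) (ModuleCat.of Λᵐᵒᵖ ((M : Type u) ⧸ N))
            (ModuleCat.of Λᵐᵒᵖ (((M : Type u) ⧸ N) ⧸ A))
            (inferInstanceAs (Module.Finite Λᵐᵒᵖ ((M : Type u) ⧸ N)))
            A.subtype A.mkQ (Submodule.injective_subtype A) (Submodule.mkQ_surjective A)
            (by rw [Submodule.range_subtype, Submodule.ker_mkQ])
            (hsimpleC _ (isSimpleModule_iff_isAtom.mpr hA)) hQC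
      have hbot := claim ⊥
      exact hC.1 _ _ (Submodule.quotEquivOfEqBot (⊥ : Submodule Λᵐᵒᵖ (M : Type u)) rfl) hbot
    refine ⟨Or.inr key, ?_, ?_⟩
    · intro M hM N
      haveI : Module.Finite Λᵐᵒᵖ (M : Type u) := hC.2.2 M hM
      haveI : IsArtinian Λᵐᵒᵖ (M : Type u) := isArtinian_of_fg_of_artinian'
      haveI : IsNoetherian Λᵐᵒᵖ (M : Type u) := IEAux.isNoetherian_of_isArtinian_module _
      exact key _ (Module.Finite.iff_fg.mpr (IsNoetherian.noetherian N))
    · intro M hM N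
      haveI : Module.Finite Λᵐᵒᵖ (M : Type u) := hC.2.2 M hM
      exact key _ (Module.Finite.quotient _ _)
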